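/- arXiv:2502.12353 — 3 statements merged into one kernel-verified Lean document; each statement's English description precedes it below -/
import Mathlib

section
/- Let Q = N(m, diag(σ²)) and Q̄ = N(m̄, diag(σ̄²)) be d-dimensional diagonal Gaussians with all coordinates of σ and σ̄ bounded below by σ₀ > 0. Then KL(Q ∥ Q̄) ≤ 2‖σ−σ̄‖₁/σ₀ + ‖σ−σ̄‖₂²/(2σ₀²) + ‖m̄−m‖₂²/(2σ₀²). -/
open Finset

lemma klGauss_pointwise (s t c σ₀ : ℝ) (hσ₀ : 0 < σ₀) (hs : σ₀ ≤ s) (ht : σ₀ ≤ t)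
    (hc : 0 ≤ c) :
    (Real.log s - Real.log t) + (1 / 2) * (t ^ 2 / s ^ 2 - 1 + c / s ^ 2)
      ≤ 2 * |s - t| / σ₀ + (s - t) ^ 2 / (2 * σ₀ ^ 2) + c / (2 * σ₀ ^ 2) := by
  have hs0 : 0 < s := lt_of_lt_of_le hσ₀ hs
  have ht0 : 0 < t := lt_of_lt_of_le hσ₀ ht
  have hss : σ₀ ^ 2 ≤ s ^ 2 := by nlinarith
  have h1 : Real.log s - Real.log t ≤ |s - t| / σ₀ := by
    have hlog := Real.log_le_sub_one_of_pos (div_pos hs0 ht0)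
    rw [Real.log_div hs0.ne' ht0.ne'] at hlog
    have h2 : s / t - 1 = (s - t) / t := by field_simp
    rw [h2] at hlog
    refine hlog.trans ?_
    calc (s - t) / t ≤ |s - t| / t := by gcongr <;> exact le_abs_self _
      _ ≤ |s - t| / σ₀ := by gcongr <;> exact abs_nonneg _
  have hA : (t - s) ^ 2 / s ^ 2 ≤ (s - t) ^ 2 / σ₀ ^ 2 := by
    have h : (t - s) ^ 2 = (s - t) ^ 2 := by ring
    rw [h]; gcongr <;> positivity
  have hB : (t - s) / s ≤ |s - t| / σ₀ := by
    calc (t - s) / s ≤ |s - t| / s := by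
          gcongr
          rw [abs_sub_comm]; exact le_abs_self _
      _ ≤ |s - t| / σ₀ := by gcongr <;> exact abs_nonneg _
  have h2 : (1 / 2) * (t ^ 2 / s ^ 2 - 1) ≤ |s - t| / σ₀ + (s - t) ^ 2 / (2 * σ₀ ^ 2) := by
    have key : t ^ 2 / s ^ 2 - 1 = (t - s) ^ 2 / s ^ 2 + 2 * ((t - s) / s) := by
      field_simp; ring
    rw [key]
    have h : (s - t) ^ 2 / (2 * σ₀ ^ 2) = (1 / 2) * ((s - t) ^ 2 / σ₀ ^ 2) := by ring
    rw [h]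
    linarith
  have h3 : (1 / 2) * (c / s ^ 2) ≤ c / (2 * σ₀ ^ 2) := by
    calc (1 / 2) * (c / s ^ 2) = c / (2 * s ^ 2) := by ring
      _ ≤ c / (2 * σ₀ ^ 2) := by gcongr <;> first | positivity | linarith
  calc (Real.log s - Real.log t) + (1 / 2) * (t ^ 2 / s ^ 2 - 1 + c / s ^ 2)
      = ((Real.log s - Real.log t) + (1 / 2) * (t ^ 2 / s ^ 2 - 1))
          + (1 / 2) * (c / s ^ 2) := by ring
    _ ≤ (|s - t| / σ₀ + (|s - t| / σ₀ + (s - t) ^ 2 / (2 * σ₀ ^ 2))) + c / (2 * σ₀ ^ 2) :=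
        add_le_add (add_le_add h1 h2) h3
    _ = 2 * |s - t| / σ₀ + (s - t) ^ 2 / (2 * σ₀ ^ 2) + c / (2 * σ₀ ^ 2) := by ring
theorem klGaussDiag_le (d : ℕ) (m mb σ σb : Fin d → ℝ) (σ₀ : ℝ) (hσ₀ : 0 < σ₀)
    (hσ : ∀ i, σ₀ ≤ σ i) (hσb : ∀ i, σ₀ ≤ σb i) :
    -- KL(N(m, diag σ²) ∥ N(mb, diag σb²)), in the closed form used in the paper
    ((∑ i, (Real.log (σ i) - Real.log (σb i))) +
        (1 / 2) * ((∑ i, (σb i) ^ 2 / (σ i) ^ 2) - d + ∑ i, (mb i - m i) ^ 2 / (σ i) ^ 2))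
      ≤ 2 * (∑ i, |σ i - σb i|) / σ₀
          + (∑ i, (σ i - σb i) ^ 2) / (2 * σ₀ ^ 2)
          + (∑ i, (mb i - m i) ^ 2) / (2 * σ₀ ^ 2) := by
  have hd : (d : ℝ) = ∑ _i : Fin d, (1 : ℝ) := by simp
  have hL : ((∑ i, (Real.log (σ i) - Real.log (σb i))) +
        (1 / 2) * ((∑ i, (σb i) ^ 2 / (σ i) ^ 2) - d + ∑ i, (mb i - m i) ^ 2 / (σ i) ^ 2))
      = ∑ i, ((Real.log (σ i) - Real.log (σb i)) +
          (1 / 2) * ((σb i) ^ 2 / (σ i) ^ 2 - 1 + (mb i - m i) ^ 2 / (σ i) ^ 2)) := by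
    rw [hd, Finset.sum_add_distrib]
    congr 1
    rw [← Finset.sum_sub_distrib, ← Finset.sum_add_distrib, Finset.mul_sum]
  have hR : 2 * (∑ i, |σ i - σb i|) / σ₀
          + (∑ i, (σ i - σb i) ^ 2) / (2 * σ₀ ^ 2)
          + (∑ i, (mb i - m i) ^ 2) / (2 * σ₀ ^ 2)
      = ∑ i, (2 * |σ i - σb i| / σ₀ + (σ i - σb i) ^ 2 / (2 * σ₀ ^ 2)
          + (mb i - m i) ^ 2 / (2 * σ₀ ^ 2)) := by
    rw [Finset.sum_add_distrib, Finset.sum_add_distrib, Finset.mul_sum, Finset.sum_div,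
      Finset.sum_div, Finset.sum_div]
  rw [hL, hR]
  exact Finset.sum_le_sum fun i _ =>
    klGauss_pointwise (σ i) (σb i) ((mb i - m i) ^ 2) σ₀ hσ₀ (hσ i) (hσb i) (sq_nonneg _)
end

section
/- With learning rate α_t = c/((t+2)log(t+2)) and gradients bounded by β (so per-step perturbation contribution is at most 2β), the unrolled SGD stability bound satisfies (1/n) Σ_{t=1}^{T} (log(T+1)/log(t+2)) α_t · 2β ≤ (2cβ log(T+1))/(n log 2), i.e., the expected parameter difference is O(log T / n). -/
open Finset in
lemma term_le (a : ℝ) (ha : 2 ≤ a) :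
    1 / ((a + 1) * (Real.log (a + 1))^2) ≤ 1 / Real.log a - 1 / Real.log (a + 1) := by
  have ha0 : (0:ℝ) < a := by linarith
  have ha1 : (0:ℝ) < a + 1 := by linarith
  have hla : 0 < Real.log a := Real.log_pos (by linarith)
  have hla1 : 0 < Real.log (a + 1) := Real.log_pos (by linarith)
  have hle : Real.log a ≤ Real.log (a + 1) := Real.log_le_log ha0 (by linarith)
  -- log(a+1) - log a ≥ 1/(a+1)
  have hkey : 1 / (a + 1) ≤ Real.log (a + 1) - Real.log a := by
    have h := Real.log_le_sub_one_of_pos (show (0:ℝ) < a / (a+1) by positivity)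
    have hdiv : Real.log (a / (a + 1)) = Real.log a - Real.log (a + 1) :=
      Real.log_div (ne_of_gt ha0) (ne_of_gt ha1)
    rw [hdiv] at h
    have : a / (a + 1) - 1 = -(1 / (a + 1)) := by field_simp; ring
    rw [this] at h
    linarith
  have hdiff : 1 / Real.log a - 1 / Real.log (a + 1)
      = (Real.log (a + 1) - Real.log a) / (Real.log a * Real.log (a + 1)) := by
    field_simp
  rw [hdiff]
  have h1 : 1 / ((a + 1) * (Real.log (a + 1))^2)
      ≤ (1 / (a + 1)) / (Real.log a * Real.log (a + 1)) := by
    rw [div_div]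
    apply one_div_le_one_div_of_le
    · positivity
    · have : Real.log a * Real.log (a+1) ≤ Real.log (a+1) * Real.log (a+1) := by nlinarith
      nlinarith [sq_nonneg (Real.log (a+1))]
  refine h1.trans ?_
  gcongr

open Finset in
lemma sum_le (T : ℕ) :
    ∑ t ∈ Finset.Icc 1 T, 1 / (((t : ℝ) + 2) * (Real.log ((t : ℝ) + 2))^2)
      ≤ 1 / Real.log 2 - 1 / Real.log ((T : ℝ) + 2) := by
  induction T with
  | zero => simp [show ((0:ℕ):ℝ) + 2 = 2 by norm_num]
  | succ T ih =>
      rw [Finset.sum_Icc_succ_top (by omega)]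
      have h := term_le ((T : ℝ) + 2) (by have := Nat.cast_nonneg (α := ℝ) T; linarith)
      push_cast
      push_cast at ih h
      have : (T:ℝ) + 2 + 1 = (T:ℝ) + 1 + 2 := by ring
      rw [this] at h
      linarith

open Finset in
theorem stability_sum_le (c β : ℝ) (hc : 0 < c) (hβ : 0 < β) (n : ℕ) (hn : 1 ≤ n) (T : ℕ) :
    (1 / (n : ℝ)) * ∑ t ∈ Finset.Icc 1 T,
        (Real.log ((T : ℝ) + 1) / Real.log ((t : ℝ) + 2)) *
          (c / (((t : ℝ) + 2) * Real.log ((t : ℝ) + 2))) * (2 * β)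
      ≤ 2 * c * β * Real.log ((T : ℝ) + 1) / ((n : ℝ) * Real.log 2) := by
  have hn0 : (0:ℝ) < n := by exact_mod_cast hn
  have hlT : 0 ≤ Real.log ((T : ℝ) + 1) := Real.log_nonneg (by push_cast; linarith [Nat.cast_nonneg (α := ℝ) T])
  have hl2 : 0 < Real.log 2 := Real.log_pos (by norm_num)
  have hrw : ∀ t ∈ Finset.Icc 1 T,
      (Real.log ((T : ℝ) + 1) / Real.log ((t : ℝ) + 2)) *
          (c / (((t : ℝ) + 2) * Real.log ((t : ℝ) + 2))) * (2 * β)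
      = (2 * c * β * Real.log ((T : ℝ) + 1)) *
          (1 / (((t : ℝ) + 2) * (Real.log ((t : ℝ) + 2))^2)) := by
    intro t ht
    have ht1 : 1 ≤ t := (Finset.mem_Icc.mp ht).1
    have hL : 0 < Real.log ((t : ℝ) + 2) :=
      Real.log_pos (by have := Nat.cast_nonneg (α := ℝ) t; linarith)
    have hx : ((t : ℝ) + 2) ≠ 0 := by positivity
    field_simp
  rw [Finset.sum_congr rfl hrw, ← Finset.mul_sum]
  have hS := sum_le T
  have hST : ∑ t ∈ Finset.Icc 1 T, 1 / (((t : ℝ) + 2) * (Real.log ((t : ℝ) + 2))^2)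
      ≤ 1 / Real.log 2 := by
    have : 0 ≤ 1 / Real.log ((T : ℝ) + 2) := by
      have : 0 < Real.log ((T:ℝ) + 2) := Real.log_pos (by push_cast; linarith [Nat.cast_nonneg (α := ℝ) T])
      positivity
    linarith
  calc (1 / (n : ℝ)) * ((2 * c * β * Real.log ((T : ℝ) + 1)) *
          ∑ t ∈ Finset.Icc 1 T, 1 / (((t : ℝ) + 2) * (Real.log ((t : ℝ) + 2))^2))
      ≤ (1 / (n : ℝ)) * ((2 * c * β * Real.log ((T : ℝ) + 1)) * (1 / Real.log 2)) := by
        apply mul_le_mul_of_nonneg_left (mul_le_mul_of_nonneg_left hST (by positivity)) (by positivity)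
    _ = 2 * c * β * Real.log ((T : ℝ) + 1) / ((n : ℝ) * Real.log 2) := by
        field_simp
end

section
/- Bayes-stability decomposition of generalization error: for an order-independent algorithm with single-point posteriors Q_z (the expected output when the n-th training point is z), the expected generalization error equals E_{z,z̄∼D}[E_{w∼Q_{z̄}}[L(w,z)] − E_{w∼Q_z}[L(w,z)]], i.e., E_S E_{w∼Q_S}[L(w,D) − L(w,S)] admits this two-point representation. -/
open MeasureTheory Finset

section Aux

variable {Z W : Type*} [MeasurableSpace Z] [MeasurableSpace W]

lemma bayes_aux_integrable {α : Type*} [MeasurableSpace α] (μ : Measure α) [IsFiniteMeasure μ]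
    {f : α → ℝ} (hf : AEStronglyMeasurable f μ) {C : ℝ} (h : ∀ x, |f x| ≤ C) :
    Integrable f μ :=
  (integrable_const C).mono' hf (ae_of_all _ (by simpa [Real.norm_eq_abs] using h))

lemma bayes_aux_abs_integral_le {α : Type*} [MeasurableSpace α] (μ : Measure α)
    [IsProbabilityMeasure μ] {f : α → ℝ} {C : ℝ} (h : ∀ x, |f x| ≤ C) : |∫ x, f x ∂μ| ≤ C := by
  have := norm_integral_le_of_norm_le_const (μ := μ) (f := f) (C := C)
    (ae_of_all _ (by simpa [Real.norm_eq_abs] using h))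
  simpa [Real.norm_eq_abs] using this

lemma bayes_aux_measurable_Q {n : ℕ} (Q : (Fin n → Z) → Measure W)
    (hQ : ∀ S, IsProbabilityMeasure (Q S))
    (hQmeas : ∀ (f : W → ℝ), Measurable f →
      Measurable fun S : Fin n → Z => ∫ w, f w ∂(Q S)) : Measurable Q := by
  apply Measure.measurable_of_measurable_coe
  intro s hs
  have h1 : (fun S => Q S s)
      = fun S => ENNReal.ofReal (∫ w, s.indicator (fun _ => (1:ℝ)) w ∂(Q S)) := by
    funext S
    rw [show (s.indicator (fun _ => (1:ℝ))) = (s.indicator 1) from rfl, integral_indicator_one hs]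
    exact (ENNReal.ofReal_toReal (measure_ne_top _ _)).symm
  rw [h1]
  exact (hQmeas _ (measurable_const.indicator hs)).ennreal_ofReal

/-- Resampling the last coordinate of an i.i.d. sample leaves the law invariant. -/
lemma bayes_aux_map_update (D : Measure Z) [IsProbabilityMeasure D] (m : ℕ) :
    Measure.map (fun p : Z × (Fin (m+1) → Z) => Function.update p.2 (Fin.last m) p.1)
      (D.prod (Measure.pi fun _ : Fin (m + 1) => D))
    = Measure.pi (fun _ : Fin (m + 1) => D) := by
  set i := Fin.last m
  set e := MeasurableEquiv.piFinSuccAbove (fun _ : Fin (m+1) => Z) i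
  have hMP := measurePreserving_piFinSuccAbove (fun _ : Fin (m+1) => D) i
  have hT : (fun p : Z × (Fin (m+1) → Z) => Function.update p.2 i p.1)
      = ⇑e.symm ∘ (Prod.map id fun S : Fin (m+1) → Z => fun j : Fin m => S (i.succAbove j)) := by
    funext p
    simp only [Function.comp_apply, Prod.map_apply, id_eq]
    refine funext fun j => ?_
    rcases eq_or_ne j i with rfl | hj
    · simp [e, MeasurableEquiv.piFinSuccAbove_symm_apply, Fin.insertNthEquiv]
    · obtain ⟨k, rfl⟩ := Fin.exists_succAbove_eq hj
      simp [e, MeasurableEquiv.piFinSuccAbove_symm_apply, Fin.insertNthEquiv, Function.update_of_ne (Fin.succAbove_ne i k)]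
  have hg : Measurable fun S : Fin (m+1) → Z => fun j : Fin m => S (i.succAbove j) :=
    measurable_pi_iff.2 fun j => measurable_pi_apply _
  rw [hT, ← Measure.map_map e.symm.measurable (measurable_id.prodMap hg),
    ← Measure.map_prod_map _ _ measurable_id hg, Measure.map_id]
  have hmapg : Measure.map (fun S : Fin (m+1) → Z => fun j : Fin m => S (i.succAbove j))
      (Measure.pi fun _ : Fin (m + 1) => D) = Measure.pi (fun _ : Fin m => D) := by
    have hsnd : (fun S : Fin (m+1) → Z => fun j : Fin m => S (i.succAbove j))
        = Prod.snd ∘ ⇑e := rfl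
    rw [hsnd, ← Measure.map_map measurable_snd e.measurable, hMP.map_eq]
    exact Measure.snd_prod
  rw [hmapg]
  exact (hMP.symm e).map_eq

end Aux

theorem bayes_stability_decomposition {Z W : Type*} [MeasurableSpace Z] [MeasurableSpace W]
    (D : Measure Z) [IsProbabilityMeasure D] (m : ℕ)
    -- the algorithm's output distribution on parameters, as a function of the dataset
    (Q : (Fin (m + 1) → Z) → Measure W)
    (hQ : ∀ S, IsProbabilityMeasure (Q S))
    -- order-independence
    (horder : ∀ (S : Fin (m + 1) → Z) (e : Equiv.Perm (Fin (m + 1))), Q (S ∘ e) = Q S)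
    (L : W → Z → ℝ) (C : ℝ) (hC : ∀ w z, |L w z| ≤ C)
    (hLmeas : Measurable (Function.uncurry L))
    (hQmeas : ∀ (f : W → ℝ), Measurable f →
      Measurable fun S : Fin (m + 1) → Z => ∫ w, f w ∂(Q S)) :
    -- the generalization error equals the two-point representation
    (∫ S, ∫ w, ((∫ z, L w z ∂D) - (m + 1 : ℝ)⁻¹ * ∑ i, L w (S i)) ∂(Q S)
        ∂(Measure.pi fun _ : Fin (m + 1) => D))
      = ∫ z, ∫ zb,
          ((∫ S, ∫ w, L w z ∂(Q (Function.update S (Fin.last m) zb))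
              ∂(Measure.pi fun _ : Fin (m + 1) => D))
            - ∫ S, ∫ w, L w z ∂(Q (Function.update S (Fin.last m) z))
              ∂(Measure.pi fun _ : Fin (m + 1) => D)) ∂D ∂D := by
  classical
  -- Basic setup
  set P : Measure (Fin (m + 1) → Z) := Measure.pi fun _ : Fin (m + 1) => D with hP
  haveI : IsProbabilityMeasure P := by rw [hP]; infer_instance
  have hQm : Measurable Q := bayes_aux_measurable_Q Q hQ hQmeas
  set κ : ProbabilityTheory.Kernel (Fin (m + 1) → Z) W := ⟨Q, hQm⟩ with hκ
  haveI : ProbabilityTheory.IsMarkovKernel κ := ⟨hQ⟩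
  -- G z S = ∫ w, L w z ∂(Q S), jointly measurable
  set G : Z → (Fin (m + 1) → Z) → ℝ := fun z S => ∫ w, L w z ∂(Q S) with hGdef
  have hGm : Measurable fun p : (Fin (m + 1) → Z) × Z => G p.2 p.1 := by
    have h1 : Measurable (Function.uncurry
        fun (p : (Fin (m + 1) → Z) × Z) (w : W) => L w p.2) :=
      hLmeas.comp (measurable_snd.prodMk measurable_fst.snd)
    have h2 := (MeasureTheory.StronglyMeasurable.integral_kernel_prod_right
      (κ := κ.comap Prod.fst measurable_fst) h1.stronglyMeasurable).measurable
    simpa [ProbabilityTheory.Kernel.comap_apply, hκ, hGdef] using h2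
  have hGb : ∀ z S, |G z S| ≤ C := by
    intro z S
    haveI := hQ S
    exact bayes_aux_abs_integral_le (Q S) (fun w => hC w z)
  -- the "resampling" map
  set T : Z × (Fin (m + 1) → Z) → (Fin (m + 1) → Z) :=
    fun p => Function.update p.2 (Fin.last m) p.1 with hTdef
  have hTm : Measurable T := by
    refine measurable_pi_iff.2 fun j => ?_
    simp only [hTdef, Function.update_apply]
    by_cases hj : j = Fin.last m
    · simpa [hj] using measurable_fst
    · simpa [hj, Function.comp_def] using (measurable_pi_apply j).comp measurable_snd
  have hPmap : Measure.map T (D.prod P) = P := bayes_aux_map_update D m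
  -- resampling identity for bounded measurable g
  have hres : ∀ (g : (Fin (m + 1) → Z) → ℝ), Measurable g → (∀ S, |g S| ≤ C) →
      ∫ S, g S ∂P = ∫ z, ∫ S, g (Function.update S (Fin.last m) z) ∂P ∂D := by
    intro g hg hgb
    have hi : Integrable (fun p => g (T p)) (D.prod P) :=
      bayes_aux_integrable (D.prod P) (C := C)
        ((hg.comp hTm).aestronglyMeasurable) (fun p => hgb _)
    conv_lhs => rw [← hPmap]
    rw [integral_map hTm.aemeasurable hg.aestronglyMeasurable,
      MeasureTheory.integral_prod _ hi]
  -- A zb z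
  set A : Z → Z → ℝ := fun zb z => ∫ S, G z (Function.update S (Fin.last m) zb) ∂P with hAdef
  have hAm : Measurable fun p : Z × Z => A p.1 p.2 := by
    have h1 : Measurable fun q : (Z × Z) × (Fin (m + 1) → Z) =>
        G q.1.2 (Function.update q.2 (Fin.last m) q.1.1) := by
      have : Measurable fun q : (Z × Z) × (Fin (m + 1) → Z) =>
          ((Function.update q.2 (Fin.last m) q.1.1, q.1.2) :
            (Fin (m + 1) → Z) × Z) :=
        (hTm.comp (measurable_fst.fst.prodMk measurable_snd)).prodMk measurable_fst.snd
      exact hGm.comp this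
    exact (MeasureTheory.StronglyMeasurable.integral_prod_right'
      (ν := P) h1.stronglyMeasurable).measurable
  have hAb : ∀ zb z, |A zb z| ≤ C := fun zb z =>
    bayes_aux_abs_integral_le P
      (f := fun S => G z (Function.update S (Fin.last m) zb)) (fun S => hGb _ _)
  -- measurability of the two slot maps of G
  have hGm2 : ∀ z, Measurable fun S => G z S :=
    fun z => hGm.comp (measurable_id.prodMk measurable_const)
  -- ###### LHS decomposition ######
  have hA_meas : Measurable fun w => ∫ z, L w z ∂D :=
    (hLmeas.stronglyMeasurable.integral_prod_right (ν := D)).measurable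
  have hA_bound : ∀ w, |∫ z, L w z ∂D| ≤ C := fun w => bayes_aux_abs_integral_le D (hC w)
  have hLi_meas : ∀ z : Z, Measurable fun w => L w z := fun z =>
    hLmeas.comp (measurable_id.prodMk measurable_const)
  have hinner : ∀ S, ∫ w, ((∫ z, L w z ∂D) - (m + 1 : ℝ)⁻¹ * ∑ i, L w (S i)) ∂(Q S)
      = (∫ w, (∫ z, L w z ∂D) ∂(Q S)) - (m + 1 : ℝ)⁻¹ * ∑ i, G (S i) S := by
    intro S
    haveI := hQ S
    have hint1 : Integrable (fun w => ∫ z, L w z ∂D) (Q S) :=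
      bayes_aux_integrable _ hA_meas.aestronglyMeasurable hA_bound
    have hinti : ∀ i : Fin (m + 1), Integrable (fun w => L w (S i)) (Q S) := fun i =>
      bayes_aux_integrable _ (hLi_meas (S i)).aestronglyMeasurable (fun w => hC w (S i))
    have hint2 : Integrable (fun w => (m + 1 : ℝ)⁻¹ * ∑ i, L w (S i)) (Q S) :=
      (integrable_finset_sum _ fun i _ => hinti i).const_mul _
    rw [integral_sub hint1 hint2, integral_const_mul _ _,
      integral_finset_sum _ (fun i _ => hinti i)]
  rw [integral_congr_ae (ae_of_all _ hinner)]
  -- outer split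
  have hm1 : Measurable fun S => ∫ w, (∫ z, L w z ∂D) ∂(Q S) := hQmeas _ hA_meas
  have hb1 : ∀ S, |∫ w, (∫ z, L w z ∂D) ∂(Q S)| ≤ C := by
    intro S; haveI := hQ S; exact bayes_aux_abs_integral_le (Q S) hA_bound
  have hmGi : ∀ i : Fin (m + 1), Measurable fun S => G (S i) S := fun i =>
    hGm.comp (measurable_id.prodMk (measurable_pi_apply i))
  have hintGi : ∀ i : Fin (m + 1), Integrable (fun S => G (S i) S) P := fun i =>
    bayes_aux_integrable _ (hmGi i).aestronglyMeasurable (fun S => hGb _ _)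
  have hint1P : Integrable (fun S => ∫ w, (∫ z, L w z ∂D) ∂(Q S)) P :=
    bayes_aux_integrable _ hm1.aestronglyMeasurable hb1
  have hint2P : Integrable (fun S => (m + 1 : ℝ)⁻¹ * ∑ i, G (S i) S) P :=
    (integrable_finset_sum _ fun i _ => hintGi i).const_mul _
  rw [integral_sub hint1P hint2P, integral_const_mul _ _,
    integral_finset_sum _ (fun i _ => hintGi i)]
  -- ###### permutation step ######
  have hperm : ∀ i : Fin (m + 1),
      ∫ S, G (S i) S ∂P = ∫ S, G (S (Fin.last m)) S ∂P := by
    intro i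
    set e : Equiv.Perm (Fin (m + 1)) := Equiv.swap i (Fin.last m) with hedef
    have hMPe : MeasurePreserving
        (⇑(MeasurableEquiv.piCongrLeft (fun _ : Fin (m + 1) => Z) e).symm) P P :=
      (measurePreserving_piCongrLeft (fun _ : Fin (m + 1) => D) e).symm _
    have key := hMPe.integral_comp' (g := fun S => G (S (Fin.last m)) S)
    have hco : ∀ S : Fin (m + 1) → Z,
        (MeasurableEquiv.piCongrLeft (fun _ : Fin (m + 1) => Z) e).symm S = S ∘ e := by
      intro S; funext j
      simp [MeasurableEquiv.piCongrLeft]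
    rw [← key]
    congr 1
    funext S
    rw [hco S]
    have h1 : (S ∘ e) (Fin.last m) = S i := by
      simp [hedef, Equiv.swap_apply_right]
    rw [h1]
    show G (S i) S = G (S i) (S ∘ ⇑e)
    simp only [hGdef]
    rw [horder S e]
  simp_rw [fun i => hperm i]
  rw [Finset.sum_const, Finset.card_univ, Fintype.card_fin]
  have hcoef : (m + 1 : ℝ)⁻¹ * ((m + 1) • ∫ S, G (S (Fin.last m)) S ∂P)
      = ∫ S, G (S (Fin.last m)) S ∂P := by
    rw [nsmul_eq_mul, ← mul_assoc,
      show ((m + 1 : ℕ) : ℝ) = (m + 1 : ℝ) by push_cast; ring,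
      inv_mul_cancel₀ (by positivity), one_mul]
  rw [hcoef]
  -- ###### T1 computation ######
  have hT1inner : ∀ S, ∫ w, (∫ z, L w z ∂D) ∂(Q S) = ∫ z, G z S ∂D := by
    intro S
    haveI := hQ S
    exact MeasureTheory.integral_integral_swap
      (bayes_aux_integrable ((Q S).prod D) (C := C) hLmeas.aestronglyMeasurable
        (fun p => hC p.1 p.2))
  have hswap2 : ∫ S, ∫ z, G z S ∂D ∂P = ∫ z, ∫ S, G z S ∂P ∂D :=
    MeasureTheory.integral_integral_swap
      (bayes_aux_integrable (P.prod D) (C := C) hGm.aestronglyMeasurable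
        (fun p => hGb _ _))
  have hT1 : ∫ S, ∫ w, (∫ z, L w z ∂D) ∂(Q S) ∂P = ∫ z, ∫ zb, A zb z ∂D ∂D := by
    rw [integral_congr_ae (ae_of_all _ hT1inner), hswap2]
    refine integral_congr_ae (ae_of_all _ fun z => ?_)
    exact hres (fun S => G z S) (hGm2 z) (fun S => hGb _ _)
  -- ###### J computation ######
  have hJ : ∫ S, G (S (Fin.last m)) S ∂P = ∫ z, A z z ∂D := by
    have hg : Measurable fun S => G (S (Fin.last m)) S := hmGi _
    have hi : Integrable (fun p => G ((T p) (Fin.last m)) (T p)) (D.prod P) :=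
      bayes_aux_integrable (D.prod P) (C := C)
        ((hg.comp hTm).aestronglyMeasurable) (fun p => hGb _ _)
    conv_lhs => rw [← hPmap]
    rw [integral_map hTm.aemeasurable hg.aestronglyMeasurable,
      MeasureTheory.integral_prod _ hi]
    refine integral_congr_ae (ae_of_all _ fun z => ?_)
    refine integral_congr_ae (ae_of_all _ fun S => ?_)
    simp [hTdef]
  rw [hT1, hJ]
  -- ###### RHS handling ######
  have hintAz : ∀ z, Integrable (fun zb => A zb z) D := fun z =>
    bayes_aux_integrable D (C := C)
      ((hAm.comp (measurable_id.prodMk measurable_const)).aestronglyMeasurable)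
      (fun zb => hAb _ _)
  have hRHS : ∀ z, ∫ zb, (A zb z - A z z) ∂D = (∫ zb, A zb z ∂D) - A z z := by
    intro z
    rw [integral_sub (hintAz z) (integrable_const _), integral_const]
    simp
  have hintA1 : Integrable (fun z => ∫ zb, A zb z ∂D) D := by
    refine bayes_aux_integrable D (C := C) ?_
      (fun z => bayes_aux_abs_integral_le D (fun zb => hAb _ _))
    exact (MeasureTheory.StronglyMeasurable.integral_prod_right' (ν := D)
      ((hAm.comp (measurable_snd.prodMk measurable_fst)).stronglyMeasurable)).measurable
      |>.aestronglyMeasurable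
  have hintA2 : Integrable (fun z => A z z) D :=
    bayes_aux_integrable D (C := C)
      ((hAm.comp (measurable_id.prodMk measurable_id)).aestronglyMeasurable)
      (fun z => hAb _ _)
  show (∫ z, ∫ zb, A zb z ∂D ∂D) - ∫ z, A z z ∂D
      = ∫ z, ∫ zb, (A zb z - A z z) ∂D ∂D
  rw [integral_congr_ae (ae_of_all _ hRHS), integral_sub hintA1 hintA2]
end
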